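/- arXiv:1806.06344 — 3 statements merged into one kernel-verified Lean document; each statement's English description precedes it below -/
import Mathlib

section
/- If u ∈ D(A), i.e. u ∈ V with ρu_x ∈ H¹(I), then (ρu_x)(x) → 0 as x → ±1. In particular, if ρu_x ∈ C⁰([-1,1]) and (ρu_x)(1) = L ≠ 0, then √ρ u_x ∉ L²(I). -/
open MeasureTheory Set Filter

lemma aux_end1 (ρ₀ : ℝ) (hρ₀ : 0 < ρ₀) (u g : ℝ → ℝ)
    (hg : ContinuousOn g (Icc (-1 : ℝ) 1))
    (hgu : ∀ x ∈ Ioo (-1 : ℝ) 1, g x = ρ₀ * (1 - x ^ 2) * deriv u x)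
    (hL : g 1 ≠ 0) :
    ¬ IntegrableOn (fun x => ρ₀ * (1 - x ^ 2) * (deriv u x) ^ 2) (Ioo (-1 : ℝ) 1) := by
  intro hi
  set L := g 1 with hL'
  have habs : (0:ℝ) < |L| := abs_pos.2 hL
  have h1 : Tendsto (fun x => |g x|) (nhdsWithin 1 (Icc (-1:ℝ) 1)) (nhds |L|) :=
    (continuous_abs.tendsto L).comp (hg 1 (by norm_num))
  have h2 : ∀ᶠ x in nhdsWithin 1 (Icc (-1:ℝ) 1), |L| / 2 < |g x| :=
    h1.eventually_const_lt (half_lt_self habs)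
  rw [Metric.nhdsWithin_basis_ball.eventually_iff] at h2
  obtain ⟨ε, hε, h2⟩ := h2
  set δ := min ε 1 with hδ'
  have hδ : 0 < δ := lt_min hε one_pos
  have hδ1 : δ ≤ 1 := min_le_right _ _
  have hδε : δ ≤ ε := min_le_left _ _
  have hsub : Ioo (1 - δ) 1 ⊆ Ioo (-1 : ℝ) 1 := fun x hx =>
    ⟨by nlinarith [hx.1], hx.2⟩
  set c2 : ℝ := (|L| / 2) ^ 2 / (2 * ρ₀) with hc2
  have hc2pos : 0 < c2 := by positivity
  have key : ∀ x ∈ Ioo (1 - δ) 1,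
      c2 * (1 - x)⁻¹ ≤ ρ₀ * (1 - x ^ 2) * (deriv u x) ^ 2 := by
    intro x hx
    have hx' := hsub hx
    have hp : 0 < ρ₀ * (1 - x ^ 2) := by
      have h1x : (0:ℝ) < 1 - x := by linarith [hx'.2]
      have h2x : (0:ℝ) < 1 + x := by linarith [hx'.1]
      nlinarith [mul_pos h1x h2x]
    have hgx : |L| / 2 < |g x| := by
      refine h2 ⟨?_, ⟨hx'.1.le, hx'.2.le⟩⟩
      rw [Metric.mem_ball, Real.dist_eq, abs_of_nonpos (by linarith [hx.2])]
      linarith [hx.1, hδε]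
    have hux : ρ₀ * (1 - x ^ 2) * (deriv u x) ^ 2 = (g x) ^ 2 / (ρ₀ * (1 - x ^ 2)) := by
      rw [hgu x hx']
      field_simp
    rw [hux]
    have hg2 : (|L| / 2) ^ 2 ≤ (g x) ^ 2 := by
      rw [← sq_abs (g x)]
      exact pow_le_pow_left₀ (by positivity) hgx.le 2
    have hpb : ρ₀ * (1 - x ^ 2) ≤ 2 * ρ₀ * (1 - x) := by nlinarith [hx'.1, hx'.2]
    have hd : (|L| / 2) ^ 2 / (2 * ρ₀ * (1 - x)) ≤ (g x) ^ 2 / (ρ₀ * (1 - x ^ 2)) :=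
      div_le_div₀ (sq_nonneg _) hg2 hp hpb
    calc c2 * (1 - x)⁻¹ = (|L| / 2) ^ 2 / (2 * ρ₀ * (1 - x)) := by
          rw [hc2]; field_simp
      _ ≤ _ := hd
  have hi' : IntegrableOn (fun x => ρ₀ * (1 - x ^ 2) * (deriv u x) ^ 2) (Ioo (1 - δ) 1) :=
    hi.mono_set hsub
  have hint : IntegrableOn (fun x => c2 * (1 - x)⁻¹) (Ioo (1 - δ) 1) := by
    refine hi'.integrable.mono
      ((measurable_const.mul ((measurable_const.sub measurable_id).inv)).aestronglyMeasurable) ?_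
    filter_upwards [ae_restrict_mem measurableSet_Ioo] with x hx
    have hk := key x hx
    have h0 : 0 ≤ c2 * (1 - x)⁻¹ := by
      have : 0 < 1 - x := by linarith [hx.2]
      positivity
    rw [Real.norm_eq_abs, Real.norm_eq_abs, abs_of_nonneg h0, abs_of_nonneg (h0.trans hk)]
    exact hk
  have h4 : IntegrableOn (fun x => (1 - x)⁻¹) (Ioo (1 - δ) 1) := by
    have := hint.const_mul c2⁻¹
    simpa [IntegrableOn, ← mul_assoc, inv_mul_cancel₀ hc2pos.ne'] using this
  have h5 : IntervalIntegrable (fun x => (x - 1)⁻¹) volume (1 - δ) 1 := by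
    rw [intervalIntegrable_iff_integrableOn_Ioo_of_le (by linarith)]
    refine MeasureTheory.IntegrableOn.congr_fun h4.neg (fun x hx => ?_) measurableSet_Ioo
    rw [Pi.neg_apply, ← inv_neg, neg_sub]
  rw [intervalIntegrable_sub_inv_iff] at h5
  rcases h5 with h5 | h5
  · linarith
  · exact h5 (right_mem_uIcc)

lemma aux_end2 (ρ₀ : ℝ) (hρ₀ : 0 < ρ₀) (u g : ℝ → ℝ)
    (hg : ContinuousOn g (Icc (-1 : ℝ) 1))
    (hgu : ∀ x ∈ Ioo (-1 : ℝ) 1, g x = ρ₀ * (1 - x ^ 2) * deriv u x)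
    (hL : g (-1) ≠ 0) :
    ¬ IntegrableOn (fun x => ρ₀ * (1 - x ^ 2) * (deriv u x) ^ 2) (Ioo (-1 : ℝ) 1) := by
  intro hi
  set L := g (-1) with hL'
  have habs : (0:ℝ) < |L| := abs_pos.2 hL
  have h1 : Tendsto (fun x => |g x|) (nhdsWithin (-1) (Icc (-1:ℝ) 1)) (nhds |L|) :=
    (continuous_abs.tendsto L).comp (hg (-1) (by norm_num))
  have h2 : ∀ᶠ x in nhdsWithin (-1) (Icc (-1:ℝ) 1), |L| / 2 < |g x| :=
    h1.eventually_const_lt (half_lt_self habs)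
  rw [Metric.nhdsWithin_basis_ball.eventually_iff] at h2
  obtain ⟨ε, hε, h2⟩ := h2
  set δ := min ε 1 with hδ'
  have hδ : 0 < δ := lt_min hε one_pos
  have hδ1 : δ ≤ 1 := min_le_right _ _
  have hδε : δ ≤ ε := min_le_left _ _
  have hsub : Ioo (-1) (-1 + δ) ⊆ Ioo (-1 : ℝ) 1 := fun x hx =>
    ⟨hx.1, by nlinarith [hx.2]⟩
  set c2 : ℝ := (|L| / 2) ^ 2 / (2 * ρ₀) with hc2
  have hc2pos : 0 < c2 := by positivity
  have key : ∀ x ∈ Ioo (-1:ℝ) (-1 + δ),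
      c2 * (x + 1)⁻¹ ≤ ρ₀ * (1 - x ^ 2) * (deriv u x) ^ 2 := by
    intro x hx
    have hx' := hsub hx
    have hp : 0 < ρ₀ * (1 - x ^ 2) := by
      have h1x : (0:ℝ) < 1 - x := by linarith [hx'.2]
      have h2x : (0:ℝ) < 1 + x := by linarith [hx'.1]
      nlinarith [mul_pos h1x h2x]
    have hgx : |L| / 2 < |g x| := by
      refine h2 ⟨?_, ⟨hx'.1.le, hx'.2.le⟩⟩
      rw [Metric.mem_ball, Real.dist_eq, abs_of_nonneg (by linarith [hx.1])]
      linarith [hx.2, hδε]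
    have hux : ρ₀ * (1 - x ^ 2) * (deriv u x) ^ 2 = (g x) ^ 2 / (ρ₀ * (1 - x ^ 2)) := by
      rw [hgu x hx']
      field_simp
    rw [hux]
    have hg2 : (|L| / 2) ^ 2 ≤ (g x) ^ 2 := by
      rw [← sq_abs (g x)]
      exact pow_le_pow_left₀ (by positivity) hgx.le 2
    have hpb : ρ₀ * (1 - x ^ 2) ≤ 2 * ρ₀ * (x + 1) := by nlinarith [hx'.1, hx'.2]
    have hd : (|L| / 2) ^ 2 / (2 * ρ₀ * (x + 1)) ≤ (g x) ^ 2 / (ρ₀ * (1 - x ^ 2)) :=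
      div_le_div₀ (sq_nonneg _) hg2 hp hpb
    calc c2 * (x + 1)⁻¹ = (|L| / 2) ^ 2 / (2 * ρ₀ * (x + 1)) := by
          rw [hc2]; field_simp
      _ ≤ _ := hd
  have hi' : IntegrableOn (fun x => ρ₀ * (1 - x ^ 2) * (deriv u x) ^ 2) (Ioo (-1) (-1 + δ)) :=
    hi.mono_set hsub
  have hint : IntegrableOn (fun x => c2 * (x + 1)⁻¹) (Ioo (-1) (-1 + δ)) := by
    refine hi'.integrable.mono
      ((measurable_const.mul ((measurable_id.add_const 1).inv)).aestronglyMeasurable) ?_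
    filter_upwards [ae_restrict_mem measurableSet_Ioo] with x hx
    have hk := key x hx
    have h0 : 0 ≤ c2 * (x + 1)⁻¹ := by
      have : 0 < x + 1 := by linarith [hx.1]
      positivity
    rw [Real.norm_eq_abs, Real.norm_eq_abs, abs_of_nonneg h0, abs_of_nonneg (h0.trans hk)]
    exact hk
  have h4 : IntegrableOn (fun x => (x + 1)⁻¹) (Ioo (-1) (-1 + δ)) := by
    have := hint.const_mul c2⁻¹
    simpa [IntegrableOn, ← mul_assoc, inv_mul_cancel₀ hc2pos.ne'] using this
  have h5 : IntervalIntegrable (fun x => (x - (-1))⁻¹) volume (-1) (-1 + δ) := by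
    rw [intervalIntegrable_iff_integrableOn_Ioo_of_le (by linarith)]
    refine MeasureTheory.IntegrableOn.congr_fun h4 (fun x hx => ?_) measurableSet_Ioo
    rw [sub_neg_eq_add]
  rw [intervalIntegrable_sub_inv_iff] at h5
  rcases h5 with h5 | h5
  · linarith
  · exact h5 (left_mem_uIcc)

/-- If u ∈ D(A), i.e. u ∈ V with ρu_x ∈ H¹(I) (so ρu_x has a continuous
representative g on [-1,1]), then (ρu_x)(x) → 0 as x → ±1, i.e. g(±1) = 0.
In particular if g(1) = L ≠ 0 then √ρ u_x ∉ L²(I). -/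
theorem stmt_2 (ρ₀ : ℝ) (hρ₀ : 0 < ρ₀) (u g : ℝ → ℝ)
    (hg : ContinuousOn g (Icc (-1 : ℝ) 1))
    (hgu : ∀ x ∈ Ioo (-1 : ℝ) 1, g x = ρ₀ * (1 - x ^ 2) * deriv u x) :
    ((IntegrableOn (fun x => ρ₀ * (1 - x ^ 2) * (deriv u x) ^ 2)
        (Ioo (-1 : ℝ) 1)) → g 1 = 0 ∧ g (-1) = 0) ∧
    (∀ L : ℝ, L ≠ 0 → g 1 = L →
      ¬ IntegrableOn (fun x => ρ₀ * (1 - x ^ 2) * (deriv u x) ^ 2)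
        (Ioo (-1 : ℝ) 1)) := by
  constructor
  · intro hi
    constructor
    · by_contra h
      exact aux_end1 ρ₀ hρ₀ u g hg hgu h hi
    · by_contra h
      exact aux_end2 ρ₀ hρ₀ u g hg hgu h hi
  · intro L hL hgL
    exact aux_end1 ρ₀ hρ₀ u g hg hgu (hgL ▸ hL)
end

section
/- (L^∞ a priori bound, one-sided version) Let u be a sufficiently regular solution of u_t - (ρ u_x)_x = Q β(u) - ε(u)|u|³u + F on (0,T)×I with ρ u_x = 0 at x = ±1 and initial datum u(0,·) bounded by M in L^∞, where M ≥ ((‖Q‖_∞‖β‖_∞ + ‖F‖_∞)/ε₁)^{1/4} and ε(s) ≥ ε₁ > 0, β ≥ 0 bounded, F bounded. Then t ↦ ‖(u(t) - M)⁺‖²_{L²(I)} is nonincreasing, and consequently u(t,x) ≤ M for all t ∈ [0,T] and a.e. x ∈ I. -/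
set_option maxHeartbeats 1000000

open MeasureTheory Set Filter Topology

lemma deriv_nonneg_left_max {f : ℝ → ℝ} {s : ℝ} (hs : 0 < s)
    (hmax : ∀ τ ∈ Icc (0:ℝ) s, f τ ≤ f s) : 0 ≤ deriv f s := by
  by_cases hd : DifferentiableAt ℝ f s
  · by_contra hneg
    push_neg at hneg
    have hslope := hasDerivAt_iff_tendsto_slope.1 hd.hasDerivAt
    have h1 : ∀ᶠ τ in 𝓝[<] s, slope f s τ < 0 :=
      (hslope.eventually (eventually_lt_nhds hneg)).filter_mono
        (nhdsWithin_mono _ fun x hx => ne_of_lt hx)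
    have h2 : Ioo (0:ℝ) s ∈ 𝓝[<] s := Ioo_mem_nhdsLT_of_mem ⟨hs, le_refl s⟩
    obtain ⟨τ, hτ1, hτ2⟩ := (h1.and (eventually_of_mem h2 fun x hx => hx)).exists
    have hlt : τ - s < 0 := sub_neg.2 hτ2.2
    rw [slope_def_field, div_neg_iff] at hτ1
    rcases hτ1 with ⟨h3, h4⟩ | ⟨h3, h4⟩
    · have := hmax τ ⟨le_of_lt hτ2.1, le_of_lt hτ2.2⟩
      linarith
    · linarith
  · simp [deriv_zero_of_not_differentiableAt hd]

lemma hasDerivAt_expansion {f : ℝ → ℝ} {z D : ℝ} (h : HasDerivAt f D z) {e : ℝ} (he : 0 < e) :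
    ∃ d > 0, ∀ ξ, |ξ - z| < d → |f ξ - f z - D*(ξ-z)| ≤ e * |ξ - z| := by
  have h2 := h.isLittleO.def he
  rw [Metric.eventually_nhds_iff] at h2
  obtain ⟨d, hd, hball⟩ := h2
  refine ⟨d, hd, fun ξ hξ => ?_⟩
  have := hball (show dist ξ z < d by rwa [Real.dist_eq])
  simpa [Real.norm_eq_abs, abs_sub_comm, mul_comm] using this

lemma lemC (ρ₀ c s z w R W : ℝ) (f φ V V' : ℝ → ℝ)
    (hρ₀ : 0 < ρ₀) (hc : 0 < c) (hs : 0 < s) (hw : 0 < w)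
    (hz : -1 < z - w) (hz' : z + w < 1)
    (hφc : Continuous φ)
    (heqz : deriv f s - deriv (fun y => ρ₀*(1-y^2)*deriv φ y) z = R) (hR : R ≤ -c)
    (htmax : ∀ τ ∈ Icc (0:ℝ) s, f τ ≤ f s)
    (hV : ∀ ξ ∈ Icc (z-w) (z+w), HasDerivAt V (V' ξ) ξ)
    (hρV : HasDerivAt (fun ξ => ρ₀*(1-ξ^2)*V' ξ) W z) (hW : W ≤ c/2)
    (hsmax : ∀ ξ ∈ Icc (z-w) (z+w), φ ξ - V ξ ≤ φ z - V z) : False := by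
  set G : ℝ → ℝ := fun y => ρ₀*(1-y^2)*deriv φ y with hGdef
  have hdt : 0 ≤ deriv f s := deriv_nonneg_left_max hs htmax
  have hD : c ≤ deriv G z := by
    have : deriv G z = deriv f s - R := by rw [← heqz]; ring
    rw [this]; linarith
  have hGdiff : DifferentiableAt ℝ G z := by
    by_contra h
    rw [deriv_zero_of_not_differentiableAt h] at hD
    linarith
  obtain ⟨d₁, hd₁, hEG⟩ := hasDerivAt_expansion hGdiff.hasDerivAt (show (0:ℝ) < c/8 by linarith)
  obtain ⟨d₂, hd₂, hEW⟩ := hasDerivAt_expansion hρV (show (0:ℝ) < c/8 by linarith)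
  set D := deriv G z with hDdef
  set γ := G z with hγdef
  set P := ρ₀*(1-z^2)*V' z with hPdef
  have hρz : ∀ ξ : ℝ, -1 < ξ → ξ < 1 → 0 < ρ₀*(1-ξ^2) := by
    intro ξ h1 h2; have : 0 < 1 - ξ^2 := by nlinarith
    positivity
  -- LEFT case
  have left : γ ≤ 0 → γ ≤ P → False := by
    intro h1 h2
    set d := min (min d₁ d₂) w with hddef
    have hd0 : 0 < d := lt_min (lt_min hd₁ hd₂) hw
    have hdw : d ≤ w := min_le_right _ _
    have hdd1 : d ≤ d₁ := le_trans (min_le_left _ _) (min_le_left _ _)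
    have hdd2 : d ≤ d₂ := le_trans (min_le_left _ _) (min_le_right _ _)
    have key : ∀ ξ, ξ ∈ Ioo (z-d) z →
        DifferentiableAt ℝ φ ξ ∧ 0 < V' ξ - deriv φ ξ := by
      intro ξ hξ
      have hξz : |ξ - z| = z - ξ := by rw [abs_of_neg (by linarith [hξ.2] : ξ - z < 0)]; ring
      have hb1 : |ξ - z| < d₁ := by rw [hξz]; have := hξ.1; linarith
      have hb2 : |ξ - z| < d₂ := by rw [hξz]; have := hξ.1; linarith
      have hG1 := hEG ξ hb1
      have hW1 := hEW ξ hb2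
      rw [hξz] at hG1 hW1
      have hzξ : 0 < z - ξ := by linarith [hξ.2]
      have hGneg : G ξ < 0 := by
        have habs := abs_le.1 hG1
        nlinarith [habs.2]
      have hφd : DifferentiableAt ℝ φ ξ := by
        by_contra h
        have : G ξ = 0 := by
          rw [hGdef]; simp [deriv_zero_of_not_differentiableAt h]
        linarith
      have hξ1 : -1 < ξ := by have := hξ.1; linarith
      have hξ2 : ξ < 1 := by have := hξ.2; linarith
      have hρ : 0 < ρ₀*(1-ξ^2) := hρz ξ hξ1 hξ2
      have hH : 0 < ρ₀*(1-ξ^2)*V' ξ - G ξ := by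
        have ha := abs_le.1 hG1
        have hb := abs_le.1 hW1
        nlinarith [ha.2, hb.1]
      refine ⟨hφd, ?_⟩
      have hder : deriv φ ξ = G ξ / (ρ₀*(1-ξ^2)) := by
        rw [hGdef]; exact (mul_div_cancel_left₀ _ hρ.ne').symm
      rw [hder]
      have : V' ξ - G ξ / (ρ₀*(1-ξ^2)) = (ρ₀*(1-ξ^2)*V' ξ - G ξ)/(ρ₀*(1-ξ^2)) := by
        rw [sub_div, mul_div_cancel_left₀ (V' ξ) hρ.ne']
      rw [this]
      exact div_pos hH hρ
    -- strict mono of Ψ on [z - d/2, z]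
    have hsub : Icc (z - d/2) z ⊆ Icc (z-w) (z+w) := by
      apply Icc_subset_Icc <;> linarith
    have hmono : StrictMonoOn (fun ξ => V ξ - φ ξ) (Icc (z - d/2) z) := by
      apply strictMonoOn_of_deriv_pos (convex_Icc _ _)
      · intro ξ hξ
        exact (((hV ξ (hsub hξ)).continuousAt).sub hφc.continuousAt).continuousWithinAt
      · intro ξ hξ
        rw [interior_Icc] at hξ
        have hξ' : ξ ∈ Ioo (z-d) z := ⟨by linarith [hξ.1], hξ.2⟩
        obtain ⟨hφd, hpos⟩ := key ξ hξ'
        have hmem : ξ ∈ Icc (z-w) (z+w) := by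
          constructor <;> [linarith [hξ.1]; linarith [hξ.2]]
        rw [HasDerivAt.deriv (f := fun ξ => V ξ - φ ξ) ((hV ξ hmem).sub hφd.hasDerivAt)]
        exact hpos
    have h3 : (fun ξ => V ξ - φ ξ) (z - d/2) < (fun ξ => V ξ - φ ξ) z := by
      apply hmono (by constructor <;> linarith) (by constructor <;> linarith)
      linarith
    have h4 := hsmax (z - d/2) (hsub ⟨le_refl _, by linarith⟩)
    simp only at h3
    linarith
  -- RIGHT case
  have right : 0 ≤ γ → P ≤ γ → False := by
    intro h1 h2
    set d := min (min d₁ d₂) w with hddef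
    have hd0 : 0 < d := lt_min (lt_min hd₁ hd₂) hw
    have hdw : d ≤ w := min_le_right _ _
    have hdd1 : d ≤ d₁ := le_trans (min_le_left _ _) (min_le_left _ _)
    have hdd2 : d ≤ d₂ := le_trans (min_le_left _ _) (min_le_right _ _)
    have key : ∀ ξ, ξ ∈ Ioo z (z+d) →
        DifferentiableAt ℝ φ ξ ∧ V' ξ - deriv φ ξ < 0 := by
      intro ξ hξ
      have hξz : |ξ - z| = ξ - z := by rw [abs_of_pos (by linarith [hξ.1] : 0 < ξ - z)]
      have hb1 : |ξ - z| < d₁ := by rw [hξz]; have := hξ.2; linarith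
      have hb2 : |ξ - z| < d₂ := by rw [hξz]; have := hξ.2; linarith
      have hG1 := hEG ξ hb1
      have hW1 := hEW ξ hb2
      rw [hξz] at hG1 hW1
      have hzξ : 0 < ξ - z := by linarith [hξ.1]
      have hGpos : 0 < G ξ := by
        have habs := abs_le.1 hG1
        nlinarith [habs.1]
      have hφd : DifferentiableAt ℝ φ ξ := by
        by_contra h
        have : G ξ = 0 := by
          rw [hGdef]; simp [deriv_zero_of_not_differentiableAt h]
        linarith
      have hξ1 : -1 < ξ := by have := hξ.1; linarith
      have hξ2 : ξ < 1 := by have := hξ.2; linarith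
      have hρ : 0 < ρ₀*(1-ξ^2) := hρz ξ hξ1 hξ2
      have hH : ρ₀*(1-ξ^2)*V' ξ - G ξ < 0 := by
        have ha := abs_le.1 hG1
        have hb := abs_le.1 hW1
        nlinarith [ha.1, hb.2]
      refine ⟨hφd, ?_⟩
      have hder : deriv φ ξ = G ξ / (ρ₀*(1-ξ^2)) := by
        rw [hGdef]; exact (mul_div_cancel_left₀ _ hρ.ne').symm
      rw [hder]
      have : V' ξ - G ξ / (ρ₀*(1-ξ^2)) = (ρ₀*(1-ξ^2)*V' ξ - G ξ)/(ρ₀*(1-ξ^2)) := by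
        rw [sub_div, mul_div_cancel_left₀ (V' ξ) hρ.ne']
      rw [this]
      exact div_neg_of_neg_of_pos hH hρ
    have hsub : Icc z (z + d/2) ⊆ Icc (z-w) (z+w) := by
      apply Icc_subset_Icc <;> linarith
    have hanti : StrictAntiOn (fun ξ => V ξ - φ ξ) (Icc z (z + d/2)) := by
      apply strictAntiOn_of_deriv_neg (convex_Icc _ _)
      · intro ξ hξ
        exact (((hV ξ (hsub hξ)).continuousAt).sub hφc.continuousAt).continuousWithinAt
      · intro ξ hξ
        rw [interior_Icc] at hξ
        have hξ' : ξ ∈ Ioo z (z+d) := ⟨hξ.1, by linarith [hξ.2]⟩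
        obtain ⟨hφd, hneg⟩ := key ξ hξ'
        have hmem : ξ ∈ Icc (z-w) (z+w) := by
          constructor <;> [linarith [hξ.1]; linarith [hξ.2]]
        rw [HasDerivAt.deriv (f := fun ξ => V ξ - φ ξ) ((hV ξ hmem).sub hφd.hasDerivAt)]
        exact hneg
    have h3 : (fun ξ => V ξ - φ ξ) (z + d/2) < (fun ξ => V ξ - φ ξ) z := by
      apply hanti (by constructor <;> linarith) (by constructor <;> linarith)
      linarith
    have h4 := hsmax (z + d/2) (hsub ⟨by linarith, le_refl _⟩)
    simp only at h3
    linarith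
  -- dispatch
  by_cases hφz : DifferentiableAt ℝ φ z
  · have hzmem : z ∈ Icc (z-w) (z+w) := ⟨by linarith, by linarith⟩
    have hmin : IsLocalMin (fun ξ => V ξ - φ ξ) z := by
      have hIcc : Icc (z-w) (z+w) ∈ 𝓝 z := Icc_mem_nhds (by linarith) (by linarith)
      exact eventually_of_mem hIcc fun ξ hξ => by have := hsmax ξ hξ; simp only; linarith
    have hder : HasDerivAt (fun ξ => V ξ - φ ξ) (V' z - deriv φ z) z :=
      (hV z hzmem).sub hφz.hasDerivAt
    have h0 : V' z - deriv φ z = 0 := by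
      have := hmin.deriv_eq_zero
      rwa [hder.deriv] at this
    have hγP : γ = P := by
      rw [hγdef, hGdef, hPdef]
      simp only
      have : deriv φ z = V' z := by linarith
      rw [this]
    rcases le_or_gt γ 0 with h | h
    · exact left h (le_of_eq hγP)
    · exact right (le_of_lt h) (le_of_eq hγP.symm)
  · have hγ0 : γ = 0 := by
      rw [hγdef, hGdef]; simp [deriv_zero_of_not_differentiableAt hφz]
    rcases le_or_gt 0 P with h | h
    · exact left (le_of_eq hγ0) (by rw [hγ0]; exact h)
    · exact right (le_of_eq hγ0.symm) (by rw [hγ0]; exact le_of_lt h)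

lemma key (ρ₀ T M MQ Mβ MF ε₁ : ℝ)
    (hρ₀ : 0 < ρ₀) (hT : 0 < T) (hε₁ : 0 < ε₁)
    (u : ℝ → ℝ → ℝ) (Q F : ℝ → ℝ → ℝ) (β ε : ℝ → ℝ)
    (hreg : Continuous (fun p : ℝ × ℝ => u p.1 p.2))
    (hQ : ∀ t x, |Q t x| ≤ MQ)
    (hβpos : ∀ y, 0 ≤ β y) (hβb : ∀ y, β y ≤ Mβ)
    (hF : ∀ t x, |F t x| ≤ MF)
    (hεlow : ∀ y, ε₁ ≤ ε y)
    (hM : ((MQ * Mβ + MF) / ε₁) ^ ((1 : ℝ) / 4) ≤ M)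
    (heq : ∀ t ∈ Ioo (0 : ℝ) T, ∀ x ∈ Ioo (-1 : ℝ) 1,
      deriv (fun s => u s x) t
          - deriv (fun y => ρ₀ * (1 - y ^ 2) * deriv (u t) y) x
        = Q t x * β (u t x) - ε (u t x) * |u t x| ^ 3 * u t x + F t x)
    (hinit : ∀ x ∈ Ioo (-1 : ℝ) 1, u 0 x ≤ M) :
    ∀ t₁ ∈ Ioo (0:ℝ) T, ∀ x₁ ∈ Ioo (-1:ℝ) 1, u t₁ x₁ ≤ M := by
  -- numeric preliminaries
  have hMQ0 : 0 ≤ MQ := le_trans (abs_nonneg _) (hQ 0 0)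
  have hMβ0 : 0 ≤ Mβ := le_trans (hβpos 0) (hβb 0)
  have hMF0 : 0 ≤ MF := le_trans (abs_nonneg _) (hF 0 0)
  have hbase : 0 ≤ (MQ*Mβ+MF)/ε₁ := by positivity
  have hM0 : 0 ≤ M := le_trans (Real.rpow_nonneg hbase _) hM
  have hM4 : MQ*Mβ + MF ≤ M^4 * ε₁ := by
    have h1 : (MQ*Mβ+MF)/ε₁ ≤ M^4 := by
      calc (MQ*Mβ+MF)/ε₁ = (((MQ*Mβ+MF)/ε₁) ^ ((1:ℝ)/4))^(4:ℕ) := by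
            rw [← Real.rpow_natCast (((MQ*Mβ+MF)/ε₁) ^ ((1:ℝ)/4)) 4, ← Real.rpow_mul hbase]
            norm_num
        _ ≤ M^4 := pow_le_pow_left₀ (Real.rpow_nonneg hbase _) hM 4
    exact (div_le_iff₀ hε₁).1 h1
  intro t₁ ht₁ x₁ hx₁
  by_contra hgt
  push_neg at hgt
  set a := u t₁ x₁ - M with hadef
  have ha : 0 < a := by simp [hadef]; linarith
  set c := ε₁ * ((M + a/2)^4 - M^4) with hcdef
  have hpow : M^4 < (M + a/2)^4 := by
    apply pow_lt_pow_left₀ (by linarith) hM0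
    norm_num
  have hc : 0 < c := mul_pos hε₁ (by linarith)
  set N := -Real.log (1 - x₁^2) with hNdef
  have h120 : (0:ℝ) < 1 - x₁^2 := by nlinarith [hx₁.1, hx₁.2]
  have hN0 : 0 ≤ N := by
    have := Real.log_nonpos (by linarith) (by nlinarith : 1 - x₁^2 ≤ 1)
    simp [hNdef]; linarith
  set lam := min (c/(8*ρ₀)) (a/(2*(N+1))) with hlamdef
  have hlam0 : 0 < lam := lt_min (by positivity) (by positivity)
  have hlamN : lam * N ≤ a/2 := by
    have h1 : lam ≤ a/(2*(N+1)) := min_le_right _ _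
    have h2 : lam * N ≤ (a/(2*(N+1))) * N := by
      apply mul_le_mul_of_nonneg_right h1 hN0
    have h3 : (a/(2*(N+1))) * N ≤ a/2 := by
      rw [div_mul_eq_mul_div, div_le_div_iff₀ (by positivity) (by norm_num)]
      nlinarith [mul_nonneg ha.le hN0]
    linarith
  set V : ℝ → ℝ := fun ξ => -lam * Real.log (1 - ξ^2) with hVdef
  set V' : ℝ → ℝ := fun ξ => lam * (2*ξ) / (1 - ξ^2) with hV'def
  have hV : ∀ ξ ∈ Ioo (-1:ℝ) 1, HasDerivAt V (V' ξ) ξ := by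
    intro ξ hξ
    have h12 : (0:ℝ) < 1 - ξ^2 := by nlinarith [hξ.1, hξ.2]
    have hinner : HasDerivAt (fun ξ:ℝ => 1 - ξ^2) (-(2*ξ)) ξ := by
      simpa using ((hasDerivAt_pow 2 ξ).const_sub 1)
    have hlog := (hinner.log (ne_of_gt h12)).const_mul (-lam)
    refine hlog.congr_deriv ?_
    simp only [hV'def]
    field_simp
  have hVnonneg : ∀ ξ ∈ Ioo (-1:ℝ) 1, 0 ≤ V ξ := by
    intro ξ hξ
    have h12 : (0:ℝ) < 1 - ξ^2 := by nlinarith [hξ.1, hξ.2]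
    have := Real.log_nonpos (by linarith) (by nlinarith : 1 - ξ^2 ≤ 1)
    simp only [hVdef]
    nlinarith
  have hVx₁ : V x₁ = lam * N := by simp only [hVdef, hNdef]; ring
  have hρV : ∀ z ∈ Ioo (-1:ℝ) 1,
      HasDerivAt (fun ξ => ρ₀*(1-ξ^2) * V' ξ) (2*lam*ρ₀) z := by
    intro z hz
    have hlin : HasDerivAt (fun ξ:ℝ => 2*lam*ρ₀*ξ) (2*lam*ρ₀) z := by
      simpa using (hasDerivAt_id z).const_mul (2*lam*ρ₀)
    apply hlin.congr_of_eventuallyEq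
    filter_upwards [Ioo_mem_nhds hz.1 hz.2] with ξ hξ
    have h12 : (1:ℝ) - ξ^2 ≠ 0 := by nlinarith [hξ.1, hξ.2]
    simp only [hV'def]
    field_simp
  have hWle : 2*lam*ρ₀ ≤ c/2 := by
    have h1 : lam ≤ c/(8*ρ₀) := min_le_left _ _
    have h2 : 2*lam*ρ₀ ≤ 2*(c/(8*ρ₀))*ρ₀ :=
      mul_le_mul_of_nonneg_right (mul_le_mul_of_nonneg_left h1 (by norm_num)) hρ₀.le
    have h3 : 2*(c/(8*ρ₀))*ρ₀ = c/4 := by field_simp; ring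
    linarith
  clear_value a c N lam V V'
  have hcont : ∀ s : ℝ, Continuous (u s) := fun s => hreg.comp (Continuous.prodMk_right s)
  -- global bound B
  obtain ⟨pB, hpBmem, hpB⟩ := (isCompact_Icc.prod isCompact_Icc).exists_isMaxOn
    (⟨(0, 0), by constructor <;> constructor <;> norm_num; exact le_of_lt ht₁.1⟩ :
      (Icc (0:ℝ) t₁ ×ˢ Icc (-1:ℝ) 1).Nonempty)
    hreg.continuousOn
  set B := u pB.1 pB.2 with hBdef
  have hB : ∀ τ ξ, τ ∈ Icc (0:ℝ) t₁ → ξ ∈ Icc (-1:ℝ) 1 → u τ ξ ≤ B := by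
    intro τ ξ h1 h2
    exact isMaxOn_iff.1 hpB (τ, ξ) ⟨h1, h2⟩
  clear_value B
  -- choose z₂
  set C₀ := B - M - a + lam*N + 1 with hC₀def
  have htend1 : Tendsto (fun ξ:ℝ => 1 - ξ^2) (𝓝[<] (1:ℝ)) (𝓝[>] 0) := by
    rw [tendsto_nhdsWithin_iff]
    constructor
    · have h : Tendsto (fun y:ℝ => 1 - y^2) (𝓝 (1:ℝ)) (𝓝 (1 - (1:ℝ)^2)) :=
        ((by fun_prop : Continuous (fun y:ℝ => 1 - y^2))).tendsto (1:ℝ)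
      norm_num at h
      exact h.mono_left nhdsWithin_le_nhds
    · filter_upwards [Ioo_mem_nhdsLT_of_mem (show (1:ℝ) ∈ Ioc (-1:ℝ) 1 by norm_num)] with ξ hξ
      have : (0:ℝ) < 1 - ξ^2 := by nlinarith [hξ.1, hξ.2]
      exact this
  have htend2 : Tendsto (fun ξ:ℝ => Real.log (1 - ξ^2)) (𝓝[<] (1:ℝ)) atBot :=
    Real.tendsto_log_nhdsGT_zero.comp htend1
  have htend3 : Tendsto V (𝓝[<] (1:ℝ)) atTop := by
    have h1 : Tendsto (fun ξ:ℝ => lam * Real.log (1 - ξ^2)) (𝓝[<] (1:ℝ)) atBot :=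
      Filter.Tendsto.const_mul_atBot hlam0 htend2
    have h2 : Tendsto (fun ξ:ℝ => -(lam * Real.log (1 - ξ^2))) (𝓝[<] (1:ℝ)) atTop :=
      tendsto_neg_atBot_atTop.comp h1
    convert h2 using 2 with ξ
    simp only [hVdef]
    ring
  have hev := (htend3.eventually_ge_atTop C₀).and
    (eventually_of_mem (Ioo_mem_nhdsLT_of_mem
      (show (1:ℝ) ∈ Ioc |x₁| 1 from ⟨abs_lt.2 ⟨hx₁.1, hx₁.2⟩, le_refl _⟩)) (fun x hx => hx))
  obtain ⟨z₂, hz₂V, hz₂m⟩ := hev.exists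
  have hz₂1 : z₂ < 1 := hz₂m.2
  have hxz₂ : |x₁| < z₂ := hz₂m.1
  have hz₂0 : 0 < z₂ := lt_of_le_of_lt (abs_nonneg x₁) hxz₂
  have hz₂n : -1 < -z₂ := by linarith
  -- max over rectangle
  have hconts : ContinuousOn (fun p : ℝ × ℝ => u p.1 p.2 - V p.2)
      (Icc (0:ℝ) t₁ ×ˢ Icc (-z₂) z₂) := by
    intro p hp
    have hp2 : p.2 ∈ Ioo (-1:ℝ) 1 := ⟨by have := hp.2.1; linarith, by have := hp.2.2; linarith⟩
    exact ((hreg.continuousAt).sub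
      (((hV p.2 hp2).continuousAt).comp continuous_snd.continuousAt)).continuousWithinAt
  obtain ⟨pm, hpmmem, hpm⟩ := (isCompact_Icc.prod isCompact_Icc).exists_isMaxOn
    (⟨(t₁, x₁), ⟨⟨le_of_lt ht₁.1, le_refl _⟩, ⟨(abs_lt.1 hxz₂).1.le, (abs_lt.1 hxz₂).2.le⟩⟩⟩ :
      (Icc (0:ℝ) t₁ ×ˢ Icc (-z₂) z₂).Nonempty)
    hconts
  set s' := pm.1 with hs'def
  set z := pm.2 with hzdef
  clear_value C₀
  have hmaxval : ∀ τ ξ, τ ∈ Icc (0:ℝ) t₁ → ξ ∈ Icc (-z₂) z₂ →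
      u τ ξ - V ξ ≤ u s' z - V z := by
    intro τ ξ h1 h2
    exact isMaxOn_iff.1 hpm (τ, ξ) ⟨h1, h2⟩
  have hx₁mem : x₁ ∈ Icc (-z₂) z₂ := ⟨(abs_lt.1 hxz₂).1.le, (abs_lt.1 hxz₂).2.le⟩
  have hval0 : M + a - V x₁ ≤ u s' z - V z := by
    have := hmaxval t₁ x₁ ⟨le_of_lt ht₁.1, le_refl _⟩ hx₁mem
    have hu : u t₁ x₁ = M + a := by simp [hadef]
    linarith
  have hzIcc : z ∈ Icc (-z₂) z₂ := hpmmem.2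
  have hzIoo1 : z ∈ Ioo (-1:ℝ) 1 := ⟨by have := hzIcc.1; linarith, by have := hzIcc.2; linarith⟩
  have hVz0 : 0 ≤ V z := hVnonneg z hzIoo1
  have husz : M + a/2 ≤ u s' z := by
    have h9 := hval0
    rw [hVx₁] at h9
    linarith only [h9, hVz0, hlamN]
  -- z is interior
  have hVz₂eq : V (-z₂) = V z₂ := by simp only [hVdef]; ring_nf
  have hVz₂ : C₀ ≤ V z₂ := hz₂V
  have hzne1 : z ≠ z₂ := by
    intro h
    have h1 := hB s' z₂ ⟨hpmmem.1.1, hpmmem.1.2⟩ ⟨by linarith, le_of_lt hz₂1⟩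
    rw [h] at hval0
    rw [hVx₁] at hval0
    have : u s' z₂ ≥ M + a - lam*N + V z₂ := by linarith
    simp only [hC₀def] at hVz₂
    linarith
  have hzne2 : z ≠ -z₂ := by
    intro h
    have h1 := hB s' (-z₂) ⟨hpmmem.1.1, hpmmem.1.2⟩ ⟨by linarith, by linarith⟩
    rw [h] at hval0
    rw [hVx₁, hVz₂eq] at hval0
    have : u s' (-z₂) ≥ M + a - lam*N + V z₂ := by linarith
    simp only [hC₀def] at hVz₂
    linarith
  have hzIoo : z ∈ Ioo (-z₂) z₂ :=
    ⟨lt_of_le_of_ne hzIcc.1 (Ne.symm hzne2), lt_of_le_of_ne hzIcc.2 hzne1⟩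
  -- s' > 0
  have hs'0 : 0 < s' := by
    rcases lt_or_eq_of_le hpmmem.1.1 with h | h
    · exact h
    · exfalso
      have h2 : u 0 z = u s' z := congrArg (fun τ => u τ z) h
      have h3 := hinit z hzIoo1
      linarith [husz, h3, h2.le, h2.ge]
  have hs'T : s' < T := lt_of_le_of_lt hpmmem.1.2 ht₁.2
  -- width
  set w := min (z + z₂) (z₂ - z) / 2 with hwdef
  have hw0 : 0 < w := by
    have h1 : 0 < z + z₂ := by have := hzIoo.1; linarith
    have h2 : 0 < z₂ - z := by have := hzIoo.2; linarith
    simp only [hwdef]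
    positivity
  have hwsub : Icc (z-w) (z+w) ⊆ Icc (-z₂) z₂ := by
    apply Icc_subset_Icc
    · have : w ≤ (z + z₂)/2 := by
        simp only [hwdef]
        have := min_le_left (z + z₂) (z₂ - z)
        linarith
      linarith
    · have : w ≤ (z₂ - z)/2 := by
        simp only [hwdef]
        have := min_le_right (z + z₂) (z₂ - z)
        linarith
      linarith
  clear_value w
  have hzw1 : -1 < z - w := by
    have := (hwsub ⟨le_refl _, by linarith⟩).1
    linarith
  have hzw2 : z + w < 1 := by
    have := (hwsub ⟨by linarith, le_refl _⟩).2
    linarith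
  -- equation at (s', z)
  have heqz := heq s' ⟨hs'0, hs'T⟩ z hzIoo1
  -- RHS bound
  have hRle : Q s' z * β (u s' z) - ε (u s' z) * |u s' z| ^ 3 * u s' z + F s' z ≤ -c := by
    obtain ⟨uz, huzdef⟩ : ∃ uz, uz = u s' z := ⟨_, rfl⟩
    rw [← huzdef]
    have husz : M + a/2 ≤ uz := by rw [huzdef]; exact husz
    have huz0 : 0 < uz := by linarith
    have habs : |uz| = uz := abs_of_pos huz0
    rw [habs]
    have hQb : Q s' z * β uz ≤ MQ * Mβ :=
      calc Q s' z * β uz ≤ MQ * β uz :=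
            mul_le_mul_of_nonneg_right (abs_le.1 (hQ s' z)).2 (hβpos uz)
        _ ≤ MQ * Mβ := mul_le_mul_of_nonneg_left (hβb uz) hMQ0
    have hFb : F s' z ≤ MF := le_trans (le_abs_self _) (hF s' z)
    have h4 : (M + a/2)^4 ≤ uz^4 := pow_le_pow_left₀ (by linarith) husz 4
    have h5 : ε₁ * uz^4 ≤ ε uz * uz^4 :=
      mul_le_mul_of_nonneg_right (hεlow uz) (by positivity)
    have h6 : ε₁ * (M + a/2)^4 ≤ ε₁ * uz^4 := mul_le_mul_of_nonneg_left h4 hε₁.le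
    have h7 : ε uz * uz ^ 3 * uz = ε uz * uz^4 := by ring
    rw [h7]
    have hend : -c = ε₁ * M^4 - ε₁*(M+a/2)^4 := by simp only [hcdef]; ring
    rw [hend]
    have h8 : M^4*ε₁ = ε₁*M^4 := by ring
    rw [h8] at hM4
    linarith
  -- apply lemC
  exact lemC ρ₀ c s' z w _ (2*lam*ρ₀) (fun τ => u τ z) (u s') V V'
    hρ₀ hc hs'0 hw0 hzw1 hzw2 (hcont s') heqz hRle
    (fun τ hτ => by
      have := hmaxval τ z ⟨hτ.1, le_trans hτ.2 hpmmem.1.2⟩ hzIcc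
      linarith)
    (fun ξ hξ => hV ξ ⟨by have := (hwsub hξ).1; linarith, by have := (hwsub hξ).2; linarith⟩)
    (hρV z hzIoo1) hWle
    (fun ξ hξ => hmaxval s' ξ ⟨hpmmem.1.1, hpmmem.1.2⟩ (hwsub hξ))

/-- L^∞ a priori bound (one-sided): for a regular solution u of
u_t - (ρ u_x)_x = Q β(u) - ε(u)|u|³u + F on (0,T)×(-1,1) with degenerate
Neumann boundary conditions and u(0,·) ≤ M, where
M ≥ ((‖Q‖_∞‖β‖_∞ + ‖F‖_∞)/ε₁)^{1/4} and ε ≥ ε₁ > 0, β ≥ 0 bounded,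
F bounded, the function t ↦ ‖(u(t)-M)⁺‖²_{L²} is nonincreasing and
u(t,x) ≤ M for all t ∈ [0,T] and a.e. x. -/
theorem stmt_12 (ρ₀ T M MQ Mβ MF ε₁ : ℝ)
    (hρ₀ : 0 < ρ₀) (hT : 0 < T) (hε₁ : 0 < ε₁)
    (u : ℝ → ℝ → ℝ) (Q F : ℝ → ℝ → ℝ) (β ε : ℝ → ℝ)
    (hreg : Continuous (fun p : ℝ × ℝ => u p.1 p.2))
    (hQ : ∀ t x, |Q t x| ≤ MQ)
    (hβpos : ∀ y, 0 ≤ β y) (hβb : ∀ y, β y ≤ Mβ)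
    (hF : ∀ t x, |F t x| ≤ MF)
    (hεlow : ∀ y, ε₁ ≤ ε y)
    (hM : ((MQ * Mβ + MF) / ε₁) ^ ((1 : ℝ) / 4) ≤ M)
    -- the equation:
    (heq : ∀ t ∈ Ioo (0 : ℝ) T, ∀ x ∈ Ioo (-1 : ℝ) 1,
      deriv (fun s => u s x) t
          - deriv (fun y => ρ₀ * (1 - y ^ 2) * deriv (u t) y) x
        = Q t x * β (u t x) - ε (u t x) * |u t x| ^ 3 * u t x + F t x)
    -- degenerate Neumann boundary condition ρ u_x = 0 at x = ±1:
    (hbc : ∀ t ∈ Ioo (0 : ℝ) T,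
      Filter.Tendsto (fun y => ρ₀ * (1 - y ^ 2) * deriv (u t) y)
        (nhdsWithin 1 (Iio 1)) (nhds 0) ∧
      Filter.Tendsto (fun y => ρ₀ * (1 - y ^ 2) * deriv (u t) y)
        (nhdsWithin (-1) (Ioi (-1))) (nhds 0))
    -- initial datum bounded by M:
    (hinit : ∀ x ∈ Ioo (-1 : ℝ) 1, u 0 x ≤ M) :
    AntitoneOn (fun t => ∫ x in Ioo (-1 : ℝ) 1, (max (u t x - M) 0) ^ 2)
        (Icc (0 : ℝ) T) ∧
    ∀ t ∈ Icc (0 : ℝ) T,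
      ∀ᵐ x ∂(MeasureTheory.volume.restrict (Ioo (-1 : ℝ) 1)), u t x ≤ M := by
  have hkey := key ρ₀ T M MQ Mβ MF ε₁ hρ₀ hT hε₁ u Q F β ε hreg hQ hβpos hβb hF hεlow hM
    heq hinit
  have hpt : ∀ t ∈ Icc (0:ℝ) T, ∀ x ∈ Ioo (-1:ℝ) 1, u t x ≤ M := by
    intro t ht x hx
    rcases eq_or_lt_of_le ht.1 with h0 | h0
    · have e : u 0 x = u t x := congrArg (fun τ => u τ x) h0
      have := hinit x hx
      linarith [e.le, e.ge]
    · rcases eq_or_lt_of_le ht.2 with hT' | hT'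
      · subst hT'
        have hlim : Filter.Tendsto (fun τ => u τ x) (nhdsWithin t (Iio t)) (nhds (u t x)) :=
          ((hreg.comp (continuous_id.prodMk continuous_const)).tendsto t).mono_left
            nhdsWithin_le_nhds
        apply le_of_tendsto hlim
        filter_upwards [Ioo_mem_nhdsLT_of_mem (show t ∈ Ioc (0:ℝ) t from ⟨h0, le_refl _⟩)]
          with τ hτ
        exact hkey τ ⟨hτ.1, hτ.2⟩ x hx
      · exact hkey t ⟨h0, hT'⟩ x hx
  have hzero : ∀ t ∈ Icc (0:ℝ) T,
      (∫ x in Ioo (-1:ℝ) 1, (max (u t x - M) 0) ^ 2) = 0 := by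
    intro t ht
    have heqon : EqOn (fun x => (max (u t x - M) 0) ^ 2) (fun _ => (0:ℝ)) (Ioo (-1:ℝ) 1) := by
      intro x hx
      have h1 := hpt t ht x hx
      have h2 : max (u t x - M) 0 = 0 := max_eq_right (by linarith)
      simp [h2]
    rw [setIntegral_congr_fun measurableSet_Ioo heqon]
    simp
  constructor
  · intro t1 h1 t2 h2 _
    simp only
    rw [hzero t1 h1, hzero t2 h2]
  · intro t ht
    rw [ae_restrict_iff' measurableSet_Ioo]
    exact Filter.Eventually.of_forall (fun x => fun hx => hpt t ht x hx)
end

section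
/- Let (βⱼ) be a sequence of nondecreasing C¹ functions with βⱼ(u) = a_i for u ≤ ū - 1/j, βⱼ(u) = a_f for u ≥ ū + 1/j, and a_i ≤ βⱼ ≤ a_f. If uⱼ → u a.e. on a measure space and βⱼ(uⱼ) ⇀ 𝓑 weakly in L², then a_i ≤ 𝓑 ≤ a_f a.e., 𝓑 = a_i a.e. on {u < ū}, and 𝓑 = a_f a.e. on {u > ū}. In other words, 𝓑(t,x) ∈ β(u(t,x)) a.e., where β is the Budyko set-valued graph. -/
open MeasureTheory Set Filter

/-- Identification of the weak limit of regularized Budyko coalbedos: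
if βⱼ are nondecreasing C¹ regularizations of the Budyko graph
(βⱼ = a_i below ū - 1/j, = a_f above ū + 1/j, values in [a_i, a_f]),
uⱼ → u a.e. and βⱼ(uⱼ) ⇀ 𝓑 weakly in L²(μ), then a_i ≤ 𝓑 ≤ a_f a.e.,
𝓑 = a_i a.e. on {u < ū} and 𝓑 = a_f a.e. on {u > ū}; i.e. 𝓑 ∈ β(u) a.e. -/
theorem stmt_16 {Ω : Type*} [MeasurableSpace Ω] (μ : Measure Ω)
    [IsFiniteMeasure μ]
    (ai af ubar : ℝ) (hai : ai < af)
    (βseq : ℕ → ℝ → ℝ)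
    (hβC1 : ∀ j : ℕ, ContDiff ℝ 1 (βseq j))
    (hβmono : ∀ j : ℕ, Monotone (βseq j))
    (hβlow : ∀ (j : ℕ) (y : ℝ), y ≤ ubar - 1 / (j + 1 : ℝ) → βseq j y = ai)
    (hβhigh : ∀ (j : ℕ) (y : ℝ), ubar + 1 / (j + 1 : ℝ) ≤ y → βseq j y = af)
    (hβrange : ∀ (j : ℕ) (y : ℝ), ai ≤ βseq j y ∧ βseq j y ≤ af)
    (useq : ℕ → Ω → ℝ) (u B : Ω → ℝ)
    (humeas : ∀ j, Measurable (useq j)) (humeas' : Measurable u)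
    (hBmem : MemLp B 2 μ)
    (hae : ∀ᵐ ω ∂μ, Tendsto (fun j => useq j ω) atTop (nhds (u ω)))
    -- weak convergence βⱼ(uⱼ) ⇀ 𝓑 in L²(μ):
    (hweak : ∀ ψ : Ω → ℝ, MemLp ψ 2 μ →
      Tendsto (fun j => ∫ ω, βseq j (useq j ω) * ψ ω ∂μ) atTop
        (nhds (∫ ω, B ω * ψ ω ∂μ))) :
    (∀ᵐ ω ∂μ, ai ≤ B ω ∧ B ω ≤ af) ∧
    (∀ᵐ ω ∂μ, u ω < ubar → B ω = ai) ∧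
    (∀ᵐ ω ∂μ, ubar < u ω → B ω = af) := by
  set C : ℝ := max |ai| |af| with hC
  have hbound : ∀ j y, |βseq j y| ≤ C := by
    intro j y
    rcases hβrange j y with ⟨h1, h2⟩
    have := neg_abs_le ai
    have := le_abs_self af
    have := le_max_left |ai| |af|
    have := le_max_right |ai| |af|
    rw [abs_le]; constructor <;> linarith
  have hmeasf : ∀ j, Measurable (fun ω => βseq j (useq j ω)) :=
    fun j => ((hβC1 j).continuous.measurable).comp (humeas j)
  have hfint : ∀ j, Integrable (fun ω => βseq j (useq j ω)) μ := by
    intro j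
    refine (integrable_const C).mono' (hmeasf j).aestronglyMeasurable ?_
    exact Eventually.of_forall fun ω => by simpa [Real.norm_eq_abs] using hbound j (useq j ω)
  have hBint : Integrable B μ := hBmem.integrable (by norm_num)
  -- weak convergence tested against indicators
  have hweakS : ∀ S : Set Ω, MeasurableSet S →
      Tendsto (fun j => ∫ ω in S, βseq j (useq j ω) ∂μ) atTop
        (nhds (∫ ω in S, B ω ∂μ)) := by
    intro S hS
    have hψ : MemLp (S.indicator (fun _ => (1:ℝ))) 2 μ := (memLp_const 1).indicator hS
    have h := hweak _ hψ
    have heq : ∀ f : Ω → ℝ, (fun ω => f ω * S.indicator (fun _ => (1:ℝ)) ω) = S.indicator f := by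
      intro f; funext ω
      by_cases hω : ω ∈ S <;> simp [hω]
    have h1 : ∀ f : Ω → ℝ, ∫ ω, f ω * S.indicator (fun _ => (1:ℝ)) ω ∂μ = ∫ ω in S, f ω ∂μ := by
      intro f; rw [show (fun ω => f ω * S.indicator (fun _ => (1:ℝ)) ω) = S.indicator f from heq f,
        integral_indicator hS]
    simp only [h1] at h
    exact h
  -- lower/upper bounds for set integrals of B
  have hBlowS : ∀ S : Set Ω, MeasurableSet S →
      ai * (μ S).toReal ≤ ∫ ω in S, B ω ∂μ := by
    intro S hS
    refine ge_of_tendsto' (hweakS S hS) fun j => ?_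
    have : ∫ ω in S, (ai:ℝ) ∂μ ≤ ∫ ω in S, βseq j (useq j ω) ∂μ :=
      integral_mono (integrable_const ai).restrict ((hfint j).restrict)
        (fun ω => (hβrange j (useq j ω)).1)
    simpa [integral_const, Measure.real, Measure.restrict_apply_univ, smul_eq_mul, mul_comm] using this
  have hBhighS : ∀ S : Set Ω, MeasurableSet S →
      ∫ ω in S, B ω ∂μ ≤ af * (μ S).toReal := by
    intro S hS
    refine le_of_tendsto' (hweakS S hS) fun j => ?_
    have : ∫ ω in S, βseq j (useq j ω) ∂μ ≤ ∫ ω in S, (af:ℝ) ∂μ :=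
      integral_mono ((hfint j).restrict) (integrable_const af).restrict
        (fun ω => (hβrange j (useq j ω)).2)
    simpa [integral_const, Measure.real, Measure.restrict_apply_univ, smul_eq_mul, mul_comm] using this
  -- a.e. bounds on B
  have hBlow : ∀ᵐ ω ∂μ, ai ≤ B ω := by
    have h := ae_nonneg_of_forall_setIntegral_nonneg (hBint.sub (integrable_const ai)) ?_
    · filter_upwards [h] with ω hω; simpa [sub_nonneg] using hω
    · intro s hs _
      simp only [Pi.sub_apply]
      rw [integral_sub hBint.restrict (integrable_const ai).restrict]
      have := hBlowS s hs
      simp only [integral_const, Measure.real, Measure.restrict_apply_univ, smul_eq_mul]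
      linarith [hBlowS s hs]
  have hBhigh : ∀ᵐ ω ∂μ, B ω ≤ af := by
    have h := ae_nonneg_of_forall_setIntegral_nonneg ((integrable_const af).sub hBint) ?_
    · filter_upwards [h] with ω hω; simpa [sub_nonneg] using hω
    · intro s hs _
      simp only [Pi.sub_apply]
      rw [integral_sub (integrable_const af).restrict hBint.restrict]
      simp only [integral_const, Measure.real, Measure.restrict_apply_univ, smul_eq_mul]
      linarith [hBhighS s hs]
  -- set-integral identification on the sublevel / superlevel sets
  have hSn_int : ∀ (n : ℕ) (S : Set Ω), MeasurableSet S → ∀ c : ℝ,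
      (∀ᵐ ω ∂(μ.restrict S), Tendsto (fun j => βseq j (useq j ω)) atTop (nhds c)) →
      ∫ ω in S, B ω ∂μ = c * (μ S).toReal := by
    intro n S hS c hconv
    have hDCT : Tendsto (fun j => ∫ ω in S, βseq j (useq j ω) ∂μ) atTop
        (nhds (∫ _ω in S, c ∂μ)) := by
      refine tendsto_integral_of_dominated_convergence (fun _ => C)
        (fun j => (hmeasf j).aestronglyMeasurable.restrict)
        (integrable_const C).restrict
        (fun j => Eventually.of_forall fun ω => by
          simpa [Real.norm_eq_abs] using hbound j (useq j ω)) hconv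
    have := tendsto_nhds_unique (hweakS S hS) hDCT
    rw [this]
    simp [integral_const, Measure.real, smul_eq_mul, mul_comm]
  -- part 2: B = ai a.e. on {u < ubar}
  have part2 : ∀ᵐ ω ∂μ, u ω < ubar → B ω = ai := by
    have key : ∀ n : ℕ, ∀ᵐ ω ∂μ, ω ∈ {ω | u ω ≤ ubar - 1 / (n + 1 : ℝ)} → B ω = ai := by
      intro n
      set S : Set Ω := {ω | u ω ≤ ubar - 1 / (n + 1 : ℝ)} with hSdef
      have hS : MeasurableSet S := measurableSet_le humeas' measurable_const
      have hconv : ∀ᵐ ω ∂(μ.restrict S),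
          Tendsto (fun j => βseq j (useq j ω)) atTop (nhds ai) := by
        filter_upwards [ae_restrict_of_ae hae, ae_restrict_mem hS] with ω hω hωS
        have hu : u ω < ubar - 1 / (2 * (n + 1 : ℝ)) := by
          have h1 : (1 : ℝ) / (2 * (n + 1)) < 1 / (n + 1) := by
            apply div_lt_div_of_pos_left one_pos (by positivity); linarith [Nat.cast_nonneg (α := ℝ) n]
          have := hωS
          simp only [hSdef, Set.mem_setOf_eq] at this
          linarith
        have h2 : ∀ᶠ j in atTop, useq j ω < ubar - 1 / (2 * (n + 1 : ℝ)) :=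
          hω.eventually_lt_const hu
        have h3 : ∀ᶠ j : ℕ in atTop, (1 : ℝ) / (j + 1) ≤ 1 / (2 * (n + 1)) := by
          filter_upwards [eventually_ge_atTop (2 * n + 1)] with j hj
          apply div_le_div_of_nonneg_left one_pos.le (by positivity)
          have : (2 * n + 1 : ℝ) ≤ j := by exact_mod_cast hj
          linarith [Nat.cast_nonneg (α := ℝ) n]
        have heq : ∀ᶠ j in atTop, βseq j (useq j ω) = ai := by
          filter_upwards [h2, h3] with j hj2 hj3
          exact hβlow j _ (by linarith)
        exact Tendsto.congr' (heq.mono fun j hj => hj.symm) tendsto_const_nhds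
      have hint := hSn_int n S hS ai hconv
      have hnn : 0 ≤ᶠ[ae (μ.restrict S)] fun ω => B ω - ai := by
        filter_upwards [ae_restrict_of_ae hBlow] with ω hω; simpa [sub_nonneg] using hω
      have hzero : ∫ ω in S, (B ω - ai) ∂μ = 0 := by
        rw [integral_sub hBint.restrict (integrable_const ai).restrict]
        simp only [integral_const, Measure.real, Measure.restrict_apply_univ, smul_eq_mul]
        linarith [hint]
      have := (setIntegral_eq_zero_iff_of_nonneg_ae hnn
        (hBint.sub (integrable_const ai)).restrict).1 hzero
      rw [EventuallyEq, ae_restrict_iff' hS] at this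
      filter_upwards [this] with ω hω hωS
      have h' : B ω - ai = 0 := hω hωS
      linarith
    rw [← ae_all_iff] at key
    filter_upwards [key] with ω hω hlt
    obtain ⟨n, hn⟩ := exists_nat_one_div_lt (show (0:ℝ) < ubar - u ω by linarith)
    exact hω n (by show _ ≤ _; linarith)
  -- part 3: B = af a.e. on {ubar < u}
  have part3 : ∀ᵐ ω ∂μ, ubar < u ω → B ω = af := by
    have key : ∀ n : ℕ, ∀ᵐ ω ∂μ, ω ∈ {ω | ubar + 1 / (n + 1 : ℝ) ≤ u ω} → B ω = af := by
      intro n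
      set S : Set Ω := {ω | ubar + 1 / (n + 1 : ℝ) ≤ u ω} with hSdef
      have hS : MeasurableSet S := measurableSet_le measurable_const humeas'
      have hconv : ∀ᵐ ω ∂(μ.restrict S),
          Tendsto (fun j => βseq j (useq j ω)) atTop (nhds af) := by
        filter_upwards [ae_restrict_of_ae hae, ae_restrict_mem hS] with ω hω hωS
        have hu : ubar + 1 / (2 * (n + 1 : ℝ)) < u ω := by
          have h1 : (1 : ℝ) / (2 * (n + 1)) < 1 / (n + 1) := by
            apply div_lt_div_of_pos_left one_pos (by positivity); linarith [Nat.cast_nonneg (α := ℝ) n]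
          have := hωS
          simp only [hSdef, Set.mem_setOf_eq] at this
          linarith
        have h2 : ∀ᶠ j in atTop, ubar + 1 / (2 * (n + 1 : ℝ)) < useq j ω :=
          hω.eventually_const_lt hu
        have h3 : ∀ᶠ j : ℕ in atTop, (1 : ℝ) / (j + 1) ≤ 1 / (2 * (n + 1)) := by
          filter_upwards [eventually_ge_atTop (2 * n + 1)] with j hj
          apply div_le_div_of_nonneg_left one_pos.le (by positivity)
          have : (2 * n + 1 : ℝ) ≤ j := by exact_mod_cast hj
          linarith [Nat.cast_nonneg (α := ℝ) n]
        have heq : ∀ᶠ j in atTop, βseq j (useq j ω) = af := by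
          filter_upwards [h2, h3] with j hj2 hj3
          exact hβhigh j _ (by linarith)
        exact Tendsto.congr' (heq.mono fun j hj => hj.symm) tendsto_const_nhds
      have hint := hSn_int n S hS af hconv
      have hnn : 0 ≤ᶠ[ae (μ.restrict S)] fun ω => af - B ω := by
        filter_upwards [ae_restrict_of_ae hBhigh] with ω hω; simpa [sub_nonneg] using hω
      have hzero : ∫ ω in S, (af - B ω) ∂μ = 0 := by
        rw [integral_sub (integrable_const af).restrict hBint.restrict]
        simp only [integral_const, Measure.real, Measure.restrict_apply_univ, smul_eq_mul]
        linarith [hint]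
      have := (setIntegral_eq_zero_iff_of_nonneg_ae hnn
        ((integrable_const af).sub hBint).restrict).1 hzero
      rw [EventuallyEq, ae_restrict_iff' hS] at this
      filter_upwards [this] with ω hω hωS
      have := hω hωS
      have : af - B ω = 0 := this
      linarith
    rw [← ae_all_iff] at key
    filter_upwards [key] with ω hω hlt
    obtain ⟨n, hn⟩ := exists_nat_one_div_lt (show (0:ℝ) < u ω - ubar by linarith)
    exact hω n (by show _ ≤ _; linarith)
  exact ⟨hBlow.and hBhigh, part2, part3⟩
end
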